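/- With φ_{h,d}(s) = ∑_{k=1}^{d-1} e(ks/d)/((1-e(kh/d))(1-e(-k/d))), for every integer s with 0 ≤ s ≤ d-1 one has φ_{h,d}(s+h) = φ_{h,d}(s) + s - (d-1)/2. -/

import Mathlib

/-- `e(x) = exp(2πi x)`. -/
noncomputable def ee (x : ℝ) : ℂ := Complex.exp (2 * Real.pi * Complex.I * x)

/-- The generalized Dedekind sum
`φ_{h,d}(s) = ∑_{k=1}^{d-1} e(ks/d) / ((1 - e(kh/d)) (1 - e(-k/d)))`. -/
noncomputable def phi (h : ℤ) (d : ℕ) (s : ℤ) : ℂ :=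
  ∑ k ∈ Finset.Ico 1 d,
    ee ((k : ℝ) * (s : ℝ) / d) /
      ((1 - ee ((k : ℝ) * (h : ℝ) / d)) * (1 - ee (-(k : ℝ) / d)))

lemma ee_add (x y : ℝ) : ee (x + y) = ee x * ee y := by
  simp [ee, mul_add, Complex.exp_add]

lemma ee_pow (n : ℕ) (x : ℝ) : ee ((n : ℝ) * x) = ee x ^ n := by
  rw [ee, ee, ← Complex.exp_nat_mul]; push_cast; ring_nf

lemma ee_eq_one_iff {m : ℤ} {d : ℕ} (hd : 0 < d) :
    ee ((m : ℝ) / d) = 1 ↔ (d : ℤ) ∣ m := by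
  rw [ee, Complex.exp_eq_one_iff]
  have hd' : (d : ℂ) ≠ 0 := by exact_mod_cast hd.ne'
  have h2 : (2 : ℂ) * Real.pi * Complex.I ≠ 0 := by
    simp [Real.pi_ne_zero, Complex.I_ne_zero]
  constructor
  · rintro ⟨n, hn⟩
    refine ⟨n, ?_⟩
    field_simp at hn
    have hmc : (m : ℂ) = d * n := by
      push_cast at hn; rw [div_eq_iff hd'] at hn; linear_combination hn
    exact_mod_cast hmc
  · rintro ⟨n, rfl⟩
    exact ⟨n, by push_cast; field_simp⟩

lemma ee_int (n : ℤ) : ee ((n : ℤ) : ℝ) = 1 := by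
  rw [ee]
  rw [show ((2 : ℂ) * Real.pi * Complex.I * ((n:ℤ):ℝ) ) = (n : ℂ) * (2 * Real.pi * Complex.I) by push_cast; ring]
  exact Complex.exp_int_mul_two_pi_mul_I n

lemma ee_ne_one {m : ℤ} {d : ℕ} (hd : 0 < d) (hnd : ¬ (d : ℤ) ∣ m) :
    ee ((m : ℝ) / d) ≠ 1 := fun hc => hnd ((ee_eq_one_iff hd).mp hc)

lemma not_dvd_of_mem {d k : ℕ} (hk : k ∈ Finset.Ico 1 d) : ¬ (d : ℤ) ∣ (k : ℤ) := by
  simp only [Finset.mem_Ico] at hk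
  rw [Int.natCast_dvd_natCast]
  intro hdvd
  have := Nat.le_of_dvd (by omega) hdvd
  omega

lemma ee_neg_ne_one {d k : ℕ} (hk : k ∈ Finset.Ico 1 d) : ee (-(k : ℝ) / d) ≠ 1 := by
  have hd : 0 < d := by simp only [Finset.mem_Ico] at hk; omega
  have h1 : ee (((-(k:ℤ) : ℤ) : ℝ) / d) ≠ 1 := by
    apply ee_ne_one hd
    rw [dvd_neg]
    exact not_dvd_of_mem hk
  have heq : ((-(k:ℤ) : ℤ) : ℝ) / d = -(k : ℝ) / d := by push_cast; ring
  rwa [heq] at h1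

lemma denom_ne {d k : ℕ} (hk : k ∈ Finset.Ico 1 d) : 1 - ee (-(k : ℝ) / d) ≠ 0 :=
  sub_ne_zero.mpr (Ne.symm (ee_neg_ne_one hk))

noncomputable def G (d : ℕ) (s : ℤ) : ℂ :=
  ∑ k ∈ Finset.Ico 1 d, ee ((k : ℝ) * (s : ℝ) / d) / (1 - ee (-(k : ℝ) / d))

lemma pair_sum {v w : ℂ} (hvw : v * w = 1) (hw : w ≠ 1) (hv : v ≠ 1) :
    1 / (1 - w) + 1 / (1 - v) = 1 := by
  have h1 : 1 - w ≠ 0 := sub_ne_zero.mpr (Ne.symm hw)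
  have h2 : 1 - v ≠ 0 := sub_ne_zero.mpr (Ne.symm hv)
  field_simp
  linear_combination -hvw

lemma G_zero {d : ℕ} (hd : 1 ≤ d) : G d 0 = ((d : ℂ) - 1) / 2 := by
  have hd0 : (d : ℝ) ≠ 0 := by positivity
  have h0 : G d 0 = ∑ k ∈ Finset.Ico 1 d, 1 / (1 - ee (-(k : ℝ) / d)) := by
    apply Finset.sum_congr rfl
    intro k hk
    congr 1
    rw [show (k : ℝ) * ((0:ℤ):ℝ) / d = 0 by push_cast; ring]
    simp [ee]
  have hrefl : G d 0 = ∑ k ∈ Finset.Ico 1 d, 1 / (1 - ee (-((d - k : ℕ) : ℝ) / d)) := by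
    rw [h0]
    refine Finset.sum_nbij' (fun k => d - k) (fun k => d - k) ?_ ?_ ?_ ?_ ?_
    · intro a ha; simp only [Finset.mem_Ico] at ha ⊢; omega
    · intro a ha; simp only [Finset.mem_Ico] at ha ⊢; omega
    · intro a ha; simp only [Finset.mem_Ico] at ha; omega
    · intro a ha; simp only [Finset.mem_Ico] at ha; omega
    · intro a ha
      simp only [Finset.mem_Ico] at ha
      have h' : d - (d - a) = a := by omega
      rw [h']
  have hsum : G d 0 + G d 0 = ∑ k ∈ Finset.Ico 1 d, (1 : ℂ) := by
    nth_rewrite 1 [h0]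
    nth_rewrite 1 [hrefl]
    rw [← Finset.sum_add_distrib]
    apply Finset.sum_congr rfl
    intro k hk
    have hk' := hk
    simp only [Finset.mem_Ico] at hk'
    have hdk : (d - k : ℕ) ∈ Finset.Ico 1 d := by simp only [Finset.mem_Ico]; omega
    apply pair_sum
    · rw [← ee_add]
      rw [show -((d - k : ℕ) : ℝ)/d + -(k:ℝ)/d = ((-1 : ℤ) : ℝ) by
        push_cast [Nat.cast_sub (by omega : k ≤ d)]
        field_simp
        ring]
      exact ee_int (-1)
    · exact ee_neg_ne_one hk
    · exact ee_neg_ne_one hdk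
  have h2 : (2 : ℂ) * G d 0 = (d : ℂ) - 1 := by
    rw [two_mul, hsum, Finset.sum_const, Nat.card_Ico, nsmul_eq_mul, mul_one]
    push_cast [Nat.cast_sub hd]
    ring
  linear_combination h2 / 2

lemma G_succ {d : ℕ} (hd : 1 ≤ d) {s : ℤ} (hs0 : 0 ≤ s) (hsd : s + 1 < d) :
    G d (s + 1) = G d s - 1 := by
  have hd0 : (d : ℝ) ≠ 0 := by positivity
  have hmnd : ¬ (d : ℤ) ∣ (s + 1) := by
    intro hdvd
    have := Int.le_of_dvd (by omega) hdvd
    omega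
  have hw1 : ee (((s+1:ℤ) : ℝ) / d) ≠ 1 := ee_ne_one (by omega) hmnd
  have key : G d (s + 1) - G d s = ∑ k ∈ Finset.Ico 1 d, ee (((s+1:ℤ) : ℝ) / d) ^ k := by
    rw [G, G, ← Finset.sum_sub_distrib]
    apply Finset.sum_congr rfl
    intro k hk
    have hden := denom_ne hk
    rw [div_sub_div_same, div_eq_iff hden]
    rw [← ee_pow]
    have h1 : ee ((k:ℝ) * ((s+1:ℤ):ℝ) / d) * ee (-(k:ℝ)/d) = ee ((k:ℝ) * (s:ℝ) / d) := by
      rw [← ee_add]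
      congr 1
      push_cast
      field_simp
      ring
    have h2 : (k:ℝ) * ((s+1:ℤ):ℝ) / d = (k:ℝ) * (((s+1:ℤ):ℝ)/d) := by push_cast; ring
    rw [← h2]
    linear_combination h1
  have hgeom : ∑ k ∈ Finset.Ico 0 d, ee (((s+1:ℤ) : ℝ) / d) ^ k = 0 := by
    rw [← Finset.range_eq_Ico, geom_sum_eq hw1]
    rw [← ee_pow]
    rw [show (d : ℝ) * (((s+1:ℤ):ℝ)/d) = (((s+1:ℤ) : ℤ) : ℝ) by field_simp]
    rw [ee_int (s+1)]
    simp
  have hsplit : ∑ k ∈ Finset.Ico 0 d, ee (((s+1:ℤ) : ℝ) / d) ^ k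
      = ee (((s+1:ℤ) : ℝ) / d) ^ 0 + ∑ k ∈ Finset.Ico 1 d, ee (((s+1:ℤ) : ℝ) / d) ^ k :=
    Finset.sum_eq_sum_Ico_succ_bot (by omega) _
  rw [hgeom] at hsplit
  simp only [pow_zero] at hsplit
  have h3 : ∑ k ∈ Finset.Ico 1 d, ee (((s+1:ℤ) : ℝ) / d) ^ k = -1 := by linear_combination -hsplit
  rw [h3] at key
  linear_combination key

lemma G_eq {d : ℕ} (hd : 1 ≤ d) {s : ℤ} (hs0 : 0 ≤ s) (hsd : s < d) :
    G d s = ((d : ℂ) - 1) / 2 - s := by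
  have key : ∀ n : ℕ, n < d → G d n = ((d : ℂ) - 1) / 2 - n := by
    intro n
    induction n with
    | zero => intro _; simpa using G_zero hd
    | succ n ih =>
      intro hn
      have h1 : ((n : ℤ) + 1 : ℤ) < d := by exact_mod_cast hn
      have := G_succ hd (by positivity) h1
      rw [show ((n + 1 : ℕ) : ℤ) = (n : ℤ) + 1 by push_cast; ring]
      rw [this, ih (by omega)]
      push_cast
      ring
  have h2 := key s.toNat (by omega)
  rw [show ((s.toNat : ℕ) : ℤ) = s by omega] at h2
  have h3 : ((s.toNat : ℕ) : ℂ) = (s : ℂ) := by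
    have h4 := Int.toNat_of_nonneg hs0
    exact_mod_cast congrArg (Int.cast : ℤ → ℂ) h4
  rw [h2, h3]

theorem phi_shift (d : ℕ) (hd : 1 ≤ d) (h : ℤ) (hcop : Int.gcd h d = 1)
    (s : ℤ) (hs0 : 0 ≤ s) (hsd : s < d) :
    phi h d (s + h) = phi h d s + (s : ℂ) - ((d : ℂ) - 1) / 2 := by
  have hd0 : 0 < d := hd
  have hcoprime : IsCoprime (d : ℤ) h :=
    (Int.isCoprime_iff_gcd_eq_one.mpr (by rwa [Int.gcd_comm]))
  have key : phi h d (s + h) - phi h d s = -G d s := by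
    rw [phi, phi, G, ← Finset.sum_sub_distrib, ← Finset.sum_neg_distrib]
    apply Finset.sum_congr rfl
    intro k hk
    have hu : ee ((k : ℝ) * (h : ℝ) / d) ≠ 1 := by
      rw [show (k:ℝ) * (h:ℝ) / d = (((k:ℤ) * h : ℤ) : ℝ) / d by push_cast; ring]
      apply ee_ne_one hd0
      intro hdvd
      exact not_dvd_of_mem hk (hcoprime.dvd_of_dvd_mul_right hdvd)
    have h1u : 1 - ee ((k : ℝ) * (h : ℝ) / d) ≠ 0 := sub_ne_zero.mpr (Ne.symm hu)
    have hw := denom_ne hk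
    have hnum : ee ((k:ℝ) * ((s + h : ℤ) : ℝ) / d)
        = ee ((k:ℝ) * (s:ℝ) / d) * ee ((k:ℝ) * (h:ℝ) / d) := by
      rw [← ee_add]
      congr 1
      push_cast
      have hdr : (d : ℝ) ≠ 0 := by positivity
      field_simp
    rw [hnum]
    field_simp
    ring
  rw [G_eq hd hs0 hsd] at key
  linear_combination key
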